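/- Let Δ be a bounded open polytope in ℝⁿ with Guillemin function v(ξ) = Σₖ δₖ(ξ) log δₖ(ξ). Then there is a constant C > 0 such that det(D²v)(p) ≤ C / d_E(p, ∂Δ)ⁿ for all p ∈ Δ, where d_E(p, ∂Δ) is the Euclidean distance from p to the boundary. -/

import Mathlib

open Real MeasureTheory
noncomputable section

def pd {n : ℕ} (f : (Fin n → ℝ) → ℝ) (i : Fin n) (x : Fin n → ℝ) : ℝ :=
  fderiv ℝ f x (Pi.single i 1)

def hess {n : ℕ} (f : (Fin n → ℝ) → ℝ) (x : Fin n → ℝ) : Matrix (Fin n) (Fin n) ℝ :=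
  Matrix.of fun i j => pd (pd f j) i x

-- Hessian entry formula for the Guillemin function
lemma guillemin_hess_entry
    {n K : ℕ} (h : Fin K → ((Fin n → ℝ) →ᵃ[ℝ] ℝ)) (c : Fin K → ℝ)
    (v : (Fin n → ℝ) → ℝ)
    (hv : ∀ ξ, v ξ = ∑ k, (h k ξ - c k) * Real.log (h k ξ - c k))
    {p : Fin n → ℝ} (hp : ∀ k, 0 < h k p - c k) (i j : Fin n) :
    hess v p i j =
      ∑ k, ((h k).linear (Pi.single j 1)) * ((h k p - c k)⁻¹ * (h k).linear (Pi.single i 1)) := by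
  classical
  set U : Set (Fin n → ℝ) := {ξ | ∀ k, 0 < h k ξ - c k} with hU
  have hcont : ∀ k, Continuous (h k) := fun k => (h k).continuous_of_finiteDimensional
  have hopen : IsOpen U := by
    rw [hU, Set.setOf_forall]
    exact isOpen_iInter_of_finite fun k =>
      isOpen_lt continuous_const ((hcont k).sub continuous_const)
  set Lc : Fin K → ((Fin n → ℝ) →L[ℝ] ℝ) :=
    fun k => LinearMap.toContinuousLinearMap (h k).linear with hLc
  have haff : ∀ k (x : Fin n → ℝ), HasFDerivAt (fun ξ => h k ξ - c k) (Lc k) x := by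
    intro k x
    have hdec : (fun ξ => h k ξ - c k) = fun ξ => (h k).linear ξ + (h k 0 - c k) := by
      funext ξ
      have := congrFun (h k).decomp ξ
      simp only [Pi.add_apply] at this
      rw [this]; ring
    rw [hdec]
    exact (Lc k).hasFDerivAt.add_const _
  have hd1 : ∀ x ∈ U, HasFDerivAt v (∑ k, (Real.log (h k x - c k) + 1) • Lc k) x := by
    intro x hx
    have hveq : v = fun ξ => ∑ k, (h k ξ - c k) * Real.log (h k ξ - c k) := funext hv
    rw [hveq]
    exact HasFDerivAt.fun_sum fun k _ =>
      by have := (Real.hasDerivAt_mul_log (ne_of_gt (hx k))).comp_hasFDerivAt x (haff k x); exact this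
  -- the first partial derivative agrees with an explicit function on U
  set g : Fin n → (Fin n → ℝ) → ℝ :=
    fun j x => ∑ k, (Real.log (h k x - c k) + 1) * ((h k).linear (Pi.single j 1)) with hg
  have hpd : ∀ x ∈ U, pd v j x = g j x := by
    intro x hx
    have := (hd1 x hx).fderiv
    simp only [pd, this, ContinuousLinearMap.coe_sum', Finset.sum_apply,
      ContinuousLinearMap.coe_smul', Pi.smul_apply, hg, smul_eq_mul]
    refine Finset.sum_congr rfl fun k _ => ?_
    simp [hLc]
  have heq : pd v j =ᶠ[nhds p] g j :=
    Filter.eventuallyEq_of_mem (hopen.mem_nhds hp) fun x hx => hpd x hx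
  have hgd : HasFDerivAt (g j)
      (∑ k, ((h k).linear (Pi.single j 1)) • ((h k p - c k)⁻¹ • Lc k)) p := by
    refine HasFDerivAt.fun_sum fun k _ => ?_
    have hlog : HasFDerivAt (fun x => Real.log (h k x - c k) + 1)
        ((h k p - c k)⁻¹ • Lc k) p :=
      by have := ((Real.hasDerivAt_log (ne_of_gt (hp k))).comp_hasFDerivAt p (haff k p)).add_const 1; exact this
    exact hlog.mul_const _
  have : hess v p i j = fderiv ℝ (g j) p (Pi.single i 1) := by
    simp only [hess, Matrix.of_apply, pd, heq.fderiv_eq]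
  rw [this, hgd.fderiv]
  simp only [ContinuousLinearMap.coe_sum', Finset.sum_apply, ContinuousLinearMap.coe_smul',
    Pi.smul_apply, smul_eq_mul]
  refine Finset.sum_congr rfl fun k _ => ?_
  simp [hLc]

/-- for the Guillemin function `v` of a bounded open polytope `Δ`,
`det(D²v)(p) ≤ C / d_E(p, ∂Δ)ⁿ` for all `p ∈ Δ`. -/
theorem guillemin_det_distance_bound
    {n K : ℕ} (h : Fin K → ((Fin n → ℝ) →ᵃ[ℝ] ℝ)) (c : Fin K → ℝ)
    (Δ : Set (Fin n → ℝ)) (hΔ : Δ = {ξ | ∀ k, h k ξ - c k > 0})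
    (hbd : Bornology.IsBounded Δ) (hne : Δ.Nonempty)
    (v : (Fin n → ℝ) → ℝ)
    (hv : ∀ ξ, v ξ = ∑ k, (h k ξ - c k) * Real.log (h k ξ - c k)) :
    ∃ C > 0, ∀ p ∈ Δ,
      (hess v p).det ≤ C / (Metric.infDist p (frontier Δ)) ^ n := by
  classical
  rcases Nat.eq_zero_or_pos n with hn | hn
  · subst hn
    refine ⟨1, one_pos, fun p _ => ?_⟩
    have : (hess v p).det = 1 := Matrix.det_fin_zero
    rw [this, pow_zero, div_one]
  haveI : Nonempty (Fin n) := ⟨⟨0, hn⟩⟩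
  have hΔne : Δ ≠ Set.univ := by
    rintro rfl
    exact NormedSpace.unbounded_univ ℝ (Fin n → ℝ) hbd
  -- choose for each k a vector x k on which the linear part is -1 (or 0 if linear part is 0)
  have hex : ∀ k : Fin K, ∃ x : Fin n → ℝ,
      ((h k).linear = 0 ∧ x = 0) ∨ (h k).linear x = -1 := by
    intro k
    by_cases hk : (h k).linear = 0
    · exact ⟨0, Or.inl ⟨hk, rfl⟩⟩
    · obtain ⟨u, hu⟩ := DFunLike.ne_iff.1 hk
      simp only [LinearMap.zero_apply] at hu
      refine ⟨(-((h k).linear u)⁻¹) • u, Or.inr ?_⟩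
      rw [LinearMap.map_smul, smul_eq_mul]
      field_simp
  choose x hxspec using hex
  set Lc : Fin K → ((Fin n → ℝ) →L[ℝ] ℝ) :=
    fun k => LinearMap.toContinuousLinearMap (h k).linear with hLc
  set B : ℝ := ∑ k, ‖Lc k‖ ^ 2 * ‖x k‖ with hB
  have hB0 : 0 ≤ B := Finset.sum_nonneg fun k _ => by positivity
  refine ⟨max ((Nat.factorial n : ℝ) * B ^ n) 1, lt_of_lt_of_le one_pos (le_max_right _ _),
    fun p hp => ?_⟩
  have hδ : ∀ k, 0 < h k p - c k := by rw [hΔ] at hp; exact hp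
  set d : ℝ := Metric.infDist p (frontier Δ) with hd
  -- d > 0
  have hfr : (frontier Δ).Nonempty := nonempty_frontier_iff.2 ⟨hne, hΔne⟩
  have hopen : IsOpen Δ := by
    rw [hΔ, Set.setOf_forall]
    exact isOpen_iInter_of_finite fun k =>
      isOpen_lt continuous_const (((h k).continuous_of_finiteDimensional).sub continuous_const)
  have hpnf : p ∉ frontier Δ := by
    rw [hopen.frontier_eq]
    exact fun hc => hc.2 hp
  have hdpos : 0 < d := (isClosed_frontier.notMem_iff_infDist_pos hfr).1 hpnf
  -- geometric bound: d ≤ (h k p - c k) * ‖x k‖ whenever the linear part is nonzero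
  have hgeo : ∀ k, (h k).linear (x k) = -1 → d ≤ (h k p - c k) * ‖x k‖ := by
    intro k hx
    obtain ⟨y, hy, hyd⟩ := exists_mem_frontier_infDist_compl_eq_dist hp hΔne
    set q : Fin n → ℝ := ((h k p - c k) • x k) + p with hq
    have hqval : h k q - c k = 0 := by
      have h1 : h k q = (h k).linear ((h k p - c k) • x k) + h k p :=
        (h k).map_vadd p ((h k p - c k) • x k)
      rw [h1, LinearMap.map_smul, hx]
      simp only [smul_eq_mul, mul_neg_one]
      ring
    have hqnot : q ∉ Δ := by
      rw [hΔ]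
      intro hq'
      exact absurd (hq' k) (by rw [hqval]; simp)
    calc d ≤ dist p y := Metric.infDist_le_dist_of_mem hy
      _ = Metric.infDist p Δᶜ := hyd.symm
      _ ≤ dist p q := Metric.infDist_le_dist_of_mem hqnot
      _ = ‖(h k p - c k) • x k‖ := by rw [dist_eq_norm, hq]; simp
      _ ≤ (h k p - c k) * ‖x k‖ := by rw [norm_smul]; simp [abs_of_pos (hδ k)]
  -- entrywise bound on the Hessian
  have hentry : ∀ i j, |hess v p i j| ≤ B / d := by
    intro i j
    rw [guillemin_hess_entry h c v hv hδ i j]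
    calc |∑ k, (h k).linear (Pi.single j 1) * ((h k p - c k)⁻¹ * (h k).linear (Pi.single i 1))|
        ≤ ∑ k, |(h k).linear (Pi.single j 1) * ((h k p - c k)⁻¹ * (h k).linear (Pi.single i 1))| :=
          Finset.abs_sum_le_sum_abs _ _
      _ ≤ ∑ k, ‖Lc k‖ ^ 2 * ‖x k‖ / d := by
          refine Finset.sum_le_sum fun k _ => ?_
          rcases hxspec k with ⟨hk0, hxk⟩ | hk1
          · -- linear part is zero
            simp [hk0]
            positivity
          · -- nonzero linear part
            have hnormi : |(h k).linear (Pi.single i 1)| ≤ ‖Lc k‖ := by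
              have := (Lc k).le_opNorm (Pi.single i 1)
              rw [Pi.norm_single, norm_one, mul_one] at this
              simpa [hLc] using this
            have hnormj : |(h k).linear (Pi.single j 1)| ≤ ‖Lc k‖ := by
              have := (Lc k).le_opNorm (Pi.single j 1)
              rw [Pi.norm_single, norm_one, mul_one] at this
              simpa [hLc] using this
            have hxk0 : 0 < ‖x k‖ := by
              rcases eq_or_lt_of_le (norm_nonneg (x k)) with h0 | h0
              · exfalso
                have : x k = 0 := by rwa [eq_comm, norm_eq_zero] at h0
                rw [this, map_zero] at hk1
                norm_num at hk1
              · exact h0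
            have hkey : d / ‖x k‖ ≤ h k p - c k := by
              rw [div_le_iff₀ hxk0]
              exact hgeo k hk1
            have hδinv : (h k p - c k)⁻¹ ≤ ‖x k‖ / d := by
              have h2 : 0 < d / ‖x k‖ := div_pos hdpos hxk0
              calc (h k p - c k)⁻¹ ≤ (d / ‖x k‖)⁻¹ := by
                    apply inv_anti₀ h2 hkey
                _ = ‖x k‖ / d := by rw [inv_div]
            rw [abs_mul, abs_mul, abs_inv]
            rw [abs_of_pos (hδ k)]
            calc |(h k).linear (Pi.single j 1)| * ((h k p - c k)⁻¹ * |(h k).linear (Pi.single i 1)|)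
                ≤ ‖Lc k‖ * ((‖x k‖ / d) * ‖Lc k‖) := by
                  apply mul_le_mul hnormj _ (mul_nonneg (inv_nonneg.2 (hδ k).le) (abs_nonneg _))
                    (norm_nonneg _)
                  exact mul_le_mul hδinv hnormi (abs_nonneg _)
                    (div_nonneg (norm_nonneg _) hdpos.le)
              _ = ‖Lc k‖ ^ 2 * ‖x k‖ / d := by ring
      _ = B / d := by rw [hB, Finset.sum_div]
  -- determinant bound
  have hdet := Matrix.det_le (abv := (AbsoluteValue.abs : AbsoluteValue ℝ ℝ)) hentry
  simp only [AbsoluteValue.abs_apply, Fintype.card_fin, nsmul_eq_mul] at hdet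
  have hle : (hess v p).det ≤ (Nat.factorial n : ℝ) * (B / d) ^ n :=
    le_trans (le_abs_self _) hdet
  calc (hess v p).det ≤ (Nat.factorial n : ℝ) * (B / d) ^ n := hle
    _ = (Nat.factorial n : ℝ) * B ^ n / d ^ n := by rw [div_pow]; ring
    _ ≤ max ((Nat.factorial n : ℝ) * B ^ n) 1 / d ^ n := by
        have hdn : (0:ℝ) < d ^ n := pow_pos hdpos n
        gcongr
        exact le_max_left _ _
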